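/- Let X be a real Hilbert space, let C₁,…,C_m ⊆ X be nonempty closed convex sets with nonempty intersection C = C₁ ∩ ⋯ ∩ C_m, and let d ∈ X satisfy P_C(d) = 0. Then inf_{y ∈ Xᵐ} v(y) = 0. (Theorem 3.1(2): zero duality gap for the best approximation problem.) -/

import Mathlib

open scoped RealInnerProductSpace

/-- The support function `δ*(z, D) = sup_{x ∈ D} ⟪z, x⟫`, with values in `EReal`. -/
noncomputable def suppFn {X : Type*} [NormedAddCommGroup X] [InnerProductSpace ℝ X]
    (z : X) (D : Set X) : EReal :=
  ⨆ x ∈ D, ((⟪z, x⟫ : ℝ) : EReal)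

set_option maxHeartbeats 1000000 in
/-- Key real-valued lemma: the dual value can be made arbitrarily small, where the support
functions are replaced by arbitrary upper bounds `s i`. -/
theorem zero_duality_gap_key {X : Type*} [NormedAddCommGroup X] [InnerProductSpace ℝ X]
    [CompleteSpace X] {m : ℕ} (C : Fin m → Set X) (d : X)
    (hCcl : ∀ i, IsClosed (C i)) (hCcv : ∀ i, Convex ℝ (C i))
    (hmem : (0 : X) ∈ ⋂ i, C i)
    (hproj : ∀ x ∈ ⋂ i, C i, ‖d - (0 : X)‖ ≤ ‖d - x‖) (ε : ℝ) (hε : 0 < ε) :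
    ∃ (y : Fin m → X) (s : Fin m → ℝ),
      (∀ i, ∀ x ∈ C i, ⟪y i, x⟫ ≤ s i) ∧
      1 / 2 * ‖d - ∑ i, y i‖ ^ 2 + ∑ i, s i ≤ ε := by
  by_contra hcon
  push_neg at hcon
  have h0C : ∀ i, (0 : X) ∈ C i := fun i => Set.mem_iInter.1 hmem i
  set E' : Set (X × ℝ) :=
    {q | ∃ (y : Fin m → X) (s : Fin m → ℝ),
      (∀ i, ∀ x ∈ C i, ⟪y i, x⟫ ≤ s i) ∧
      1 / 2 * ‖q.1 - ∑ i, y i‖ ^ 2 + ∑ i, s i ≤ q.2}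
  have hsnn : ∀ (y : Fin m → X) (s : Fin m → ℝ),
      (∀ i, ∀ x ∈ C i, ⟪y i, x⟫ ≤ s i) → (0:ℝ) ≤ ∑ i, s i := by
    intro y s hadm
    refine Finset.sum_nonneg fun i _ => ?_
    have := hadm i 0 (h0C i)
    simpa using this
  -- E' is convex
  have hconv : Convex ℝ E' := by
    rintro ⟨z, t⟩ ⟨y, s, hadm, hval⟩ ⟨z', t'⟩ ⟨y', s', hadm', hval'⟩ a b ha hb hab
    dsimp only at hval hval'
    refine ⟨fun i => a • y i + b • y' i, fun i => a * s i + b * s' i, ?_, ?_⟩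
    · intro i x hx
      dsimp only
      have h1 := hadm i x hx
      have h2 := hadm' i x hx
      rw [inner_add_left, real_inner_smul_left, real_inner_smul_left]
      nlinarith [mul_le_mul_of_nonneg_left h1 ha, mul_le_mul_of_nonneg_left h2 hb]
    · simp only [Prod.smul_mk, Prod.mk_add_mk, smul_eq_mul]
      have hsum : ∑ i, (a • y i + b • y' i) = a • ∑ i, y i + b • ∑ i, y' i := by
        rw [Finset.sum_add_distrib, Finset.smul_sum, Finset.smul_sum]
      have hns : ‖(a • z + b • z') - ∑ i, (a • y i + b • y' i)‖
          ≤ a * ‖z - ∑ i, y i‖ + b * ‖z' - ∑ i, y' i‖ := by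
        rw [hsum]
        calc ‖(a • z + b • z') - (a • ∑ i, y i + b • ∑ i, y' i)‖
            = ‖a • (z - ∑ i, y i) + b • (z' - ∑ i, y' i)‖ := by
              rw [smul_sub, smul_sub]; congr 1; abel
          _ ≤ ‖a • (z - ∑ i, y i)‖ + ‖b • (z' - ∑ i, y' i)‖ := norm_add_le _ _
          _ = a * ‖z - ∑ i, y i‖ + b * ‖z' - ∑ i, y' i‖ := by
              rw [norm_smul, norm_smul, Real.norm_of_nonneg ha, Real.norm_of_nonneg hb]
      have hns2 : ‖(a • z + b • z') - ∑ i, (a • y i + b • y' i)‖ ^ 2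
          ≤ (a * ‖z - ∑ i, y i‖ + b * ‖z' - ∑ i, y' i‖) ^ 2 :=
        pow_le_pow_left₀ (norm_nonneg _) hns 2
      have hssum : ∑ i, (a * s i + b * s' i) = a * ∑ i, s i + b * ∑ i, s' i := by
        rw [Finset.sum_add_distrib, Finset.mul_sum, Finset.mul_sum]
      rw [hssum]
      have key : (a * ‖z - ∑ i, y i‖ + b * ‖z' - ∑ i, y' i‖) ^ 2
          ≤ a * ‖z - ∑ i, y i‖ ^ 2 + b * ‖z' - ∑ i, y' i‖ ^ 2 := by
        nlinarith [mul_nonneg (mul_nonneg ha hb)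
          (sq_nonneg (‖z - ∑ i, y i‖ - ‖z' - ∑ i, y' i‖)),
          sq_nonneg (‖z - ∑ i, y i‖), sq_nonneg (‖z' - ∑ i, y' i‖)]
      have hvA := mul_le_mul_of_nonneg_left hval ha
      have hvB := mul_le_mul_of_nonneg_left hval' hb
      nlinarith [hns2, key, hvA, hvB]
  -- (d, 0) is not in the closure of E'
  have hnotin : ((d, (0:ℝ)) : X × ℝ) ∉ closure E' := by
    intro hcl
    set δ : ℝ := min (ε / 4) 1 with hδdef
    have hδpos : 0 < δ := lt_min (by linarith) one_pos
    obtain ⟨q, hqE, hqd⟩ := Metric.mem_closure_iff.1 hcl δ hδpos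
    obtain ⟨y, s, hadm, hval⟩ := hqE
    rw [Prod.dist_eq, sup_lt_iff] at hqd
    obtain ⟨hd1, hd2⟩ := hqd
    dsimp only at hd1 hd2
    rw [dist_eq_norm] at hd1
    rw [Real.dist_eq] at hd2
    have hq2 : q.2 < δ := by
      have h := abs_lt.1 hd2
      linarith [h.1]
    have htri : ‖d - ∑ i, y i‖ ≤ ‖d - q.1‖ + ‖q.1 - ∑ i, y i‖ := by
      have := dist_triangle d q.1 (∑ i, y i)
      simpa [dist_eq_norm] using this
    have hssn := hsnn y s hadm
    have hbig := hcon y s hadm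
    have hδ1 : δ ≤ ε / 4 := min_le_left _ _
    have hδ2 : δ ≤ 1 := min_le_right _ _
    have hD := norm_nonneg (d - q.1)
    have hN := norm_nonneg (q.1 - ∑ i, y i)
    have hF := norm_nonneg (d - ∑ i, y i)
    have h1 : ‖d - ∑ i, y i‖ ^ 2 ≤ 2 * ‖d - q.1‖ ^ 2 + 2 * ‖q.1 - ∑ i, y i‖ ^ 2 := by
      nlinarith [mul_self_le_mul_self hF htri, sq_nonneg (‖d - q.1‖ - ‖q.1 - ∑ i, y i‖)]
    have h2 : ‖d - q.1‖ ^ 2 ≤ δ ^ 2 := by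
      nlinarith [mul_self_le_mul_self hD hd1.le]
    have h3 : δ ^ 2 ≤ δ := by nlinarith
    linarith
  -- separate (d,0) from closure E'
  obtain ⟨f, u, hfd, hfEcl⟩ :=
    geometric_hahn_banach_point_closed (hconv.closure) isClosed_closure hnotin
  have hfE : ∀ q ∈ E', u < f q := fun q hq => hfEcl q (subset_closure hq)
  set β : ℝ := f (0, 1) with hβdef
  have hf_split : ∀ (z : X) (t : ℝ), f (z, t) = f (z, 0) + t * β := by
    intro z t
    have hzt : ((z, t) : X × ℝ) = (z, (0:ℝ)) + t • ((0:X), (1:ℝ)) := by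
      simp [Prod.ext_iff]
    rw [hzt, map_add, map_smul, smul_eq_mul, hβdef]
  have hmemE : ∀ T : ℝ, 1 / 2 * ‖d‖ ^ 2 ≤ T → ((d, T) : X × ℝ) ∈ E' := by
    intro T hT
    refine ⟨0, 0, fun i x hx => by simp, ?_⟩
    simpa using hT
  have hβpos : 0 < β := by
    by_contra hβle
    push_neg at hβle
    have h1 := hfE _ (hmemE (1 / 2 * ‖d‖ ^ 2 + 1) (by linarith))
    rw [hf_split] at h1
    have hT : (0:ℝ) ≤ 1 / 2 * ‖d‖ ^ 2 + 1 := by positivity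
    nlinarith [hfd, mul_nonneg hT (neg_nonneg.2 hβle)]
  have hβne : β ≠ 0 := ne_of_gt hβpos
  -- Riesz representation of z ↦ f (z, 0)
  set g : X →L[ℝ] ℝ := f.comp (ContinuousLinearMap.inl ℝ X ℝ) with hgdef
  set p0 : X := (InnerProductSpace.toDual ℝ X).symm g with hp0def
  have hp0_apply : ∀ z : X, ⟪p0, z⟫ = f (z, 0) := by
    intro z
    rw [hp0def, InnerProductSpace.toDual_symm_apply]
    simp [hgdef]
  set p : X := (-(1 / β)) • p0 with hpdef
  have hpz : ∀ z : X, f (z, 0) = -(β * ⟪p, z⟫) := by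
    intro z
    rw [hpdef, real_inner_smul_left, hp0_apply z]
    field_simp
  set γ : ℝ := u / β with hγdef
  have hγ : u = β * γ := by rw [hγdef]; field_simp
  -- the key inequality
  have hS1 : ∀ (y : Fin m → X) (s : Fin m → ℝ), (∀ i, ∀ x ∈ C i, ⟪y i, x⟫ ≤ s i) →
      ⟪p, ∑ i, y i⟫ + 1 / 2 * ‖p‖ ^ 2 + γ < ∑ i, s i := by
    intro y s hadm
    have hq : ((∑ i, y i + p, 1 / 2 * ‖p‖ ^ 2 + ∑ i, s i) : X × ℝ) ∈ E' := by
      refine ⟨y, s, hadm, le_of_eq ?_⟩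
      show 1 / 2 * ‖(∑ i, y i + p) - ∑ i, y i‖ ^ 2 + ∑ i, s i = 1 / 2 * ‖p‖ ^ 2 + ∑ i, s i
      rw [add_sub_cancel_left]
    have h1 := hfE _ hq
    rw [hf_split, hpz] at h1
    rw [inner_add_right, real_inner_self_eq_norm_sq, hγ] at h1
    have h2 : β * (⟪p, ∑ i, y i⟫ + 1 / 2 * ‖p‖ ^ 2 + γ) < β * (∑ i, s i) := by nlinarith [h1]
    exact (mul_lt_mul_iff_right₀ hβpos).1 h2
  have hγd : 0 < γ + ⟪p, d⟫ := by
    have h := hfd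
    rw [hpz d, hγ] at h
    nlinarith [h]
  -- p belongs to every C j
  have hpC : ∀ j, p ∈ C j := by
    intro j
    by_contra hpj
    obtain ⟨h, u', hCu', hu'p⟩ := geometric_hahn_banach_closed_point (hCcv j) (hCcl j) hpj
    set q : X := (InnerProductSpace.toDual ℝ X).symm h with hqdef
    have hq_apply : ∀ z : X, ⟪q, z⟫ = h z := fun z => by
      rw [hqdef, InnerProductSpace.toDual_symm_apply]
    have hc : (0:ℝ) < h p - u' := by linarith
    set r : ℝ := (|1 / 2 * ‖p‖ ^ 2 + γ| + 1) / (h p - u') with hrdef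
    have hrpos : 0 < r := by positivity
    have hadm : ∀ i, ∀ x ∈ C i,
        ⟪(fun i => if i = j then r • q else 0) i, x⟫ ≤ (fun i => if i = j then r * u' else 0) i := by
      intro i x hx
      by_cases hij : i = j
      · subst hij
        show ⟪if i = i then r • q else 0, x⟫ ≤ if i = i then r * u' else 0
        rw [if_pos rfl, if_pos rfl, real_inner_smul_left, hq_apply]
        exact mul_le_mul_of_nonneg_left (hCu' x hx).le hrpos.le
      · show ⟪if i = j then r • q else 0, x⟫ ≤ if i = j then r * u' else 0
        rw [if_neg hij, if_neg hij]
        simp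
    have hS := hS1 _ _ hadm
    simp only [Finset.sum_ite_eq', Finset.mem_univ, if_true] at hS
    rw [real_inner_smul_right, real_inner_comm, hq_apply] at hS
    have hrc : r * (h p - u') = |1 / 2 * ‖p‖ ^ 2 + γ| + 1 := by
      rw [hrdef]; exact div_mul_cancel₀ _ hc.ne'
    nlinarith [neg_abs_le (1 / 2 * ‖p‖ ^ 2 + γ), hS, hrc]
  -- conclude
  have hS0 := hS1 0 0 (fun i x hx => by simp)
  simp only [Pi.zero_apply, Finset.sum_const_zero, inner_zero_right, zero_add] at hS0
  have hpmem : p ∈ ⋂ i, C i := Set.mem_iInter.2 hpC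
  have hdp := hproj p hpmem
  rw [sub_zero] at hdp
  have hdp2 : ‖d‖ ^ 2 ≤ ‖d - p‖ ^ 2 := pow_le_pow_left₀ (norm_nonneg d) hdp 2
  have hexp : ‖d - p‖ ^ 2 = ‖d‖ ^ 2 - 2 * ⟪d, p⟫ + ‖p‖ ^ 2 := norm_sub_sq_real (x := d) (y := p)
  have hcomm : ⟪p, d⟫ = ⟪d, p⟫ := real_inner_comm d p
  linarith

/-- coercion of a finite sum of reals to `EReal` -/
theorem EReal_coe_sum {n : ℕ} (s : Fin n → ℝ) :
    ((∑ i, s i : ℝ) : EReal) = ∑ i, ((s i : ℝ) : EReal) :=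
  map_sum (⟨⟨Real.toEReal, EReal.coe_zero⟩, EReal.coe_add⟩ : ℝ →+ EReal) s Finset.univ

set_option maxHeartbeats 1000000 in
/-- Theorem 3.1(2): zero duality gap for the best approximation problem. -/
theorem zero_duality_gap_BAP {X : Type*} [NormedAddCommGroup X] [InnerProductSpace ℝ X]
    [CompleteSpace X] {m : ℕ} (C : Fin m → Set X) (d : X)
    (hCne : ∀ i, (C i).Nonempty) (hCcl : ∀ i, IsClosed (C i)) (hCcv : ∀ i, Convex ℝ (C i))
    (hmem : (0 : X) ∈ ⋂ i, C i)
    (hproj : ∀ x ∈ ⋂ i, C i, ‖d - (0 : X)‖ ≤ ‖d - x‖) :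
    ⨅ y : Fin m → X,
      (((1 / 2 * ‖d - ∑ i, y i‖ ^ 2 : ℝ) : EReal) + ∑ i, suppFn (y i) (C i)) = (0 : EReal) := by
  have h0C : ∀ i, (0 : X) ∈ C i := fun i => Set.mem_iInter.1 hmem i
  refine le_antisymm ?_ ?_
  · -- iInf ≤ 0
    by_contra hlt
    push_neg at hlt
    obtain ⟨ε, hε0, hεi⟩ := EReal.exists_between_coe_real hlt
    have hεpos : (0:ℝ) < ε := by exact_mod_cast hε0
    obtain ⟨y, s, hadm, hval⟩ := zero_duality_gap_key C d hCcl hCcv hmem hproj ε hεpos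
    have h2 : ∑ i, suppFn (y i) (C i) ≤ ((∑ i, s i : ℝ) : EReal) := by
      rw [EReal_coe_sum]
      refine Finset.sum_le_sum fun i _ => ?_
      exact iSup₂_le fun x hx => EReal.coe_le_coe_iff.2 (hadm i x hx)
    have h1 : (⨅ y' : Fin m → X,
        (((1 / 2 * ‖d - ∑ i, y' i‖ ^ 2 : ℝ) : EReal) + ∑ i, suppFn (y' i) (C i)))
        ≤ ((1 / 2 * ‖d - ∑ i, y i‖ ^ 2 : ℝ) : EReal) + ∑ i, suppFn (y i) (C i) :=
      iInf_le _ y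
    have h3 : ((1 / 2 * ‖d - ∑ i, y i‖ ^ 2 : ℝ) : EReal) + ∑ i, suppFn (y i) (C i)
        ≤ (ε : EReal) := by
      calc ((1 / 2 * ‖d - ∑ i, y i‖ ^ 2 : ℝ) : EReal) + ∑ i, suppFn (y i) (C i)
          ≤ ((1 / 2 * ‖d - ∑ i, y i‖ ^ 2 : ℝ) : EReal) + ((∑ i, s i : ℝ) : EReal) :=
            add_le_add (le_refl _) h2
        _ = ((1 / 2 * ‖d - ∑ i, y i‖ ^ 2 + ∑ i, s i : ℝ) : EReal) := (EReal.coe_add _ _).symm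
        _ ≤ (ε : EReal) := EReal.coe_le_coe_iff.2 hval
    exact absurd (h1.trans h3) (not_le.2 hεi)
  · -- 0 ≤ iInf
    refine le_iInf fun y => ?_
    have h1 : (0:EReal) ≤ ((1 / 2 * ‖d - ∑ i, y i‖ ^ 2 : ℝ) : EReal) := by
      exact_mod_cast (by positivity : (0:ℝ) ≤ 1 / 2 * ‖d - ∑ i, y i‖ ^ 2)
    have h2 : ∀ i ∈ Finset.univ, (0:EReal) ≤ suppFn (y i) (C i) := by
      intro i _
      have : ((⟪y i, (0:X)⟫ : ℝ) : EReal) ≤ suppFn (y i) (C i) :=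
        le_iSup₂ (f := fun x (_ : x ∈ C i) => ((⟪y i, x⟫ : ℝ) : EReal)) 0 (h0C i)
      simpa using this
    have := add_le_add h1 (Finset.sum_nonneg h2)
    simpa using this
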